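/- arXiv:2512.05223 — 5 statements merged into one kernel-verified Lean document; each statement's English description precedes it below -/
import Mathlib

section
/- Let n ≥ 1, let G = K_n be the complete graph on vertices v_1,...,v_n, and let τ be a color set with |τ| ≥ 2n containing colors c_1,...,c_n,d_1,...,d_n. Let φ' and φ'' be any two proper τ-colorings of K_n such that the difference s = X(φ'') − X(φ') has connected support graph (V(s), E(s)) as in the circuit characterization. Then at most one color appears in φ'' that does not appear in φ'. -/
/-- The difference graph `G(s)` of a vector `s` on vertex-color pairs. -/
def diffGraph {V τ : Type*} (G : SimpleGraph V) (s : V × τ → ℝ) : SimpleGraph V where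
  Adj u v := G.Adj u v ∧ ∃ i, s (u, i) + s (v, i) = 0 ∧ s (u, i) ≠ 0
  symm := ⟨by
    rintro u v ⟨ha, i, hsum, hne⟩
    exact ⟨ha.symm, i, by linarith, fun h => hne (by linarith)⟩⟩
  loopless := ⟨fun v hv => G.loopless.irrefl v hv.1⟩

/-- On the complete graph `K_n` with a color set of size at least `2n`, if two proper
colorings (i.e. injective color assignments) differ by a circuit — i.e. the difference
graph of `s = X(φ'') - X(φ')` is connected on its support — then at most one color
appears in `φ''` that does not appear in `φ'`. -/
theorem stmt5 {τ : Type*} [Fintype τ] [DecidableEq τ] (n : ℕ)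
    (hcard : 2 * n ≤ Fintype.card τ)
    (c d : Fin n → τ) (hcd : Function.Injective (Sum.elim c d))
    (φ' φ'' : Fin n → τ)
    (h' : Function.Injective φ') (h'' : Function.Injective φ'')
    (s : Fin n × τ → ℝ)
    (hs : s = fun p => (if φ'' p.1 = p.2 then (1 : ℝ) else 0) -
      (if φ' p.1 = p.2 then (1 : ℝ) else 0))
    (hconn : ∀ u w : Fin n, (∃ i, s (u, i) ≠ 0) → (∃ i, s (w, i) ≠ 0) →
      (diffGraph (SimpleGraph.completeGraph (Fin n)) s).Reachable u w) :
    {x : τ | (∃ v, φ'' v = x) ∧ ¬ ∃ v, φ' v = x}.Subsingleton := by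
  subst hs
  rintro x ⟨⟨v, hv⟩, hx'⟩ y ⟨⟨w, hw⟩, hy'⟩
  -- v, w are in the support
  have hvs : φ' v ≠ φ'' v := fun h => hx' ⟨v, h.trans hv⟩
  have hws : φ' w ≠ φ'' w := fun h => hy' ⟨w, h.trans hw⟩
  -- the "receives old color" relation
  set R : Fin n → Fin n → Prop := fun u u' => φ'' u' = φ' u with hR
  have hsrc_v : ∀ u, ¬ R u v := fun u h => hx' ⟨u, h.symm.trans hv⟩
  have hsrc_w : ∀ u, ¬ R u w := fun u h => hy' ⟨u, h.symm.trans hw⟩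
  have adjR : ∀ u u',
      (diffGraph (SimpleGraph.completeGraph (Fin n))
        (fun p => (if φ'' p.1 = p.2 then (1 : ℝ) else 0) -
          (if φ' p.1 = p.2 then (1 : ℝ) else 0))).Adj u u' → R u u' ∨ R u' u := by
    rintro u u' ⟨hne, i, hsum, hnz⟩
    simp only [hR]
    by_cases h1 : φ'' u = i <;> by_cases h2 : φ' u = i <;>
      by_cases h3 : φ'' u' = i <;> by_cases h4 : φ' u' = i <;>
      simp only [h1, h2, h3, h4, if_pos, if_neg, if_true, if_false] at hsum hnz <;>
      first
        | (left; exact h3.trans h2.symm)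
        | (right; exact h1.trans h4.symm)
        | (revert hsum hnz; norm_num)
  -- from the source v, everything reachable is a forward R-chain
  have key : ∀ (u) (p : (diffGraph (SimpleGraph.completeGraph (Fin n))
      (fun p => (if φ'' p.1 = p.2 then (1 : ℝ) else 0) -
        (if φ' p.1 = p.2 then (1 : ℝ) else 0))).Walk u v),
      Relation.ReflTransGen R v u := by
    intro u p
    induction p with
    | nil => exact Relation.ReflTransGen.refl
    | @cons a b _ h q ih =>
      have ih' := ih hv hvs hsrc_v
      rcases adjR _ _ h.symm with hr | hr
      · exact ih'.tail hr
      · -- hr : R a b, with b reachable from v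
        rcases ih'.cases_tail with heq | ⟨c, hc, hcb⟩
        · exact absurd (heq ▸ hr) (hsrc_v a)
        · have hac : a = c := h' (hr.symm.trans hcb)
          exact hac ▸ hc
  have hvsup : (∃ i, ((fun p : Fin n × τ => (if φ'' p.1 = p.2 then (1 : ℝ) else 0) -
      (if φ' p.1 = p.2 then (1 : ℝ) else 0)) (v, i)) ≠ 0) := by
    refine ⟨φ'' v, ?_⟩
    norm_num [hvs]
  have hwsup : (∃ i, ((fun p : Fin n × τ => (if φ'' p.1 = p.2 then (1 : ℝ) else 0) -
      (if φ' p.1 = p.2 then (1 : ℝ) else 0)) (w, i)) ≠ 0) := by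
    refine ⟨φ'' w, ?_⟩
    norm_num [hws]
  obtain ⟨p⟩ := hconn v w hvsup hwsup
  have hchain := key w p.reverse
  rcases hchain.cases_tail with heq | ⟨c, _, hcw⟩
  · rw [← hv, ← hw, heq]
  · exact absurd hcw (hsrc_w c)
end

section
/- For every n there exist a graph G on n vertices, a color set τ, and proper τ-colorings φ₁, φ₂, such that any sequence of proper τ-colorings from φ₁ to φ₂ in which consecutive colorings differ by a circuit of the fractional coloring polytope has length at least n. In particular, take G = K_n, τ of size 2n with colors c_1,...,c_n,d_1,...,d_n, φ₁(v_i) = c_i and φ₂(v_i) = d_i. -/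
/-- The difference `X(φ') - X(φ)` of the characteristic vectors of two colorings. -/
def dv {V τ : Type*} [DecidableEq τ] (φ φ' : V → τ) : V × τ → ℝ :=
  fun p => (if φ' p.1 = p.2 then (1 : ℝ) else 0) - (if φ p.1 = p.2 then (1 : ℝ) else 0)

lemma key {n : ℕ} {τ : Type*} [DecidableEq τ] (φ φ' : Fin n → τ)
    (hφ : Function.Injective φ)
    (hreach : ∀ u w : Fin n,
      (∃ i, dv φ φ' (u, i) ≠ 0) → (∃ i, dv φ φ' (w, i) ≠ 0) →
      (diffGraph (SimpleGraph.completeGraph (Fin n)) (dv φ φ')).Reachable u w) :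
    (Finset.image φ' Finset.univ \ Finset.image φ Finset.univ).card ≤ 1 := by
  rw [Finset.card_le_one]
  intro b1 h1 b2 h2
  by_contra hne
  simp only [Finset.mem_sdiff, Finset.mem_image, Finset.mem_univ, true_and] at h1 h2
  obtain ⟨⟨v1, hv1⟩, hb1⟩ := h1
  obtain ⟨⟨v2, hv2⟩, hb2⟩ := h2
  push_neg at hb1 hb2
  set G := diffGraph (SimpleGraph.completeGraph (Fin n)) (dv φ φ') with hG
  set R : Fin n → Fin n → Prop := fun u w => φ' u = φ w with hR
  have adj_imp : ∀ u w, G.Adj u w → R u w ∨ R w u := by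
    rintro u w ⟨hne, i, hsum, hnz⟩
    simp only [dv] at hsum hnz
    by_cases a : φ' u = i <;> by_cases b : φ u = i <;>
      by_cases c : φ' w = i <;> by_cases d : φ w = i <;>
      simp only [hR] <;>
      first
      | exact Or.inl (a.trans d.symm)
      | exact Or.inr (c.trans b.symm)
      | (exfalso; simp [a, b, c, d] at hsum hnz)
  set D : Fin n → Prop := fun x => Relation.ReflTransGen R x v1 with hD
  have closure : ∀ x y, G.Adj x y → D x → D y := by
    intro x y hadj hx
    rcases adj_imp x y hadj with hxy | hyx
    · rcases hx.cases_head with heq | ⟨c, hxc, hc⟩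
      · exact (hb1 y (by rw [← hxy, heq, hv1])).elim
      · exact (hφ (hxc ▸ hxy : φ c = φ y) ▸ hc)
    · exact Relation.ReflTransGen.head hyx hx
  have walk : ∀ x y, G.Walk x y → D x → D y := by
    intro x y w
    induction w with
    | nil => exact id
    | cons h _ ih => exact fun hx => ih (closure _ _ h hx)
  have supp1 : ∃ i, dv φ φ' (v1, i) ≠ 0 := by
    refine ⟨b1, ?_⟩
    simp [dv, hv1, hb1 v1]
  have supp2 : ∃ i, dv φ φ' (v2, i) ≠ 0 := by
    refine ⟨b2, ?_⟩
    simp [dv, hv2, hb2 v2]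
  obtain ⟨w⟩ := hreach v1 v2 supp1 supp2
  have hd2 : D v2 := walk v1 v2 w Relation.ReflTransGen.refl
  rcases hd2.cases_head with heq | ⟨c, h2c, _⟩
  · exact hne (by rw [← hv1, ← heq, hv2])
  · exact hb2 c (by rw [← h2c, hv2])

/-- On `G = K_n` with `2n` colors, any sequence of proper colorings from
`φ₁ = (v_i ↦ c_i)` to `φ₂ = (v_i ↦ d_i)` in which consecutive colorings differ by a
circuit of the fractional coloring polytope (nonzero difference with connected difference
graph) has length at least `n`. -/
theorem stmt6 (n L : ℕ) (ψ : Fin (L + 1) → Fin n → Fin (2 * n))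
    (hproper : ∀ j, Function.Injective (ψ j))
    (h0 : ψ 0 = fun v => ⟨v.1, by have := v.isLt; omega⟩)
    (hL : ψ (Fin.last L) = fun v => ⟨n + v.1, by have := v.isLt; omega⟩)
    (hstep : ∀ j : Fin L,
      ψ j.castSucc ≠ ψ j.succ ∧
      ∀ u w : Fin n,
        (∃ i, dv (ψ j.castSucc) (ψ j.succ) (u, i) ≠ 0) →
        (∃ i, dv (ψ j.castSucc) (ψ j.succ) (w, i) ≠ 0) →
        (diffGraph (SimpleGraph.completeGraph (Fin n))
          (dv (ψ j.castSucc) (ψ j.succ))).Reachable u w) :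
    n ≤ L := by
  classical
  set C : Fin (L + 1) → Finset (Fin (2 * n)) :=
    fun j => Finset.image (ψ j) Finset.univ with hC
  have hstep' : ∀ j : Fin L, (C j.succ \ C j.castSucc).card ≤ 1 := by
    intro j
    exact key (ψ j.castSucc) (ψ j.succ) (hproper j.castSucc) (hstep j).2
  have hind : ∀ m : ℕ, (hm : m ≤ L) → (C ⟨m, by omega⟩ \ C 0).card ≤ m := by
    intro m
    induction m with
    | zero => intro _; simp [Finset.sdiff_self, show (⟨0, by omega⟩ : Fin (L+1)) = 0 from rfl]
    | succ m ih =>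
      intro hm
      have hmL : m < L := by omega
      set j : Fin L := ⟨m, hmL⟩ with hj
      have h1 : (C ⟨m + 1, by omega⟩ \ C 0) ⊆
          (C j.succ \ C j.castSucc) ∪ (C ⟨m, by omega⟩ \ C 0) := by
        intro x hx
        simp only [Finset.mem_sdiff, Finset.mem_union] at hx ⊢
        have hsucc : (j.succ : Fin (L+1)) = ⟨m + 1, by omega⟩ := rfl
        have hcast : (j.castSucc : Fin (L+1)) = ⟨m, by omega⟩ := rfl
        by_cases hxm : x ∈ C ⟨m, by omega⟩
        · exact Or.inr ⟨hxm, hx.2⟩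
        · exact Or.inl ⟨hsucc ▸ hx.1, hcast ▸ hxm⟩
      calc (C ⟨m + 1, by omega⟩ \ C 0).card
          ≤ ((C j.succ \ C j.castSucc) ∪ (C ⟨m, by omega⟩ \ C 0)).card :=
            Finset.card_le_card h1
        _ ≤ (C j.succ \ C j.castSucc).card + (C ⟨m, by omega⟩ \ C 0).card :=
            Finset.card_union_le _ _
        _ ≤ 1 + m := Nat.add_le_add (hstep' j) (ih (by omega))
        _ = m + 1 := by omega
  have hfinal := hind L le_rfl
  have hlast : (⟨L, by omega⟩ : Fin (L + 1)) = Fin.last L := rfl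
  rw [hlast] at hfinal
  have hdisj : C (Fin.last L) \ C 0 = C (Fin.last L) := by
    apply Finset.sdiff_eq_self_of_disjoint
    rw [Finset.disjoint_left]
    intro x hx hx0
    simp only [hC, hL, h0, Finset.mem_image, Finset.mem_univ, true_and] at hx hx0
    obtain ⟨v, hv⟩ := hx
    obtain ⟨u, hu⟩ := hx0
    have : n + v.1 = u.1 := congrArg Fin.val (hv.trans hu.symm)
    have := u.isLt
    omega
  rw [hdisj] at hfinal
  have hcard : (C (Fin.last L)).card = n := by
    rw [hC]
    rw [Finset.card_image_of_injective _ (hproper (Fin.last L))]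
    simp
  omega
end

section
/- Let G = K_n and let τ be a color set with |τ| = n. For any two proper τ-colorings φ₁, φ₂ of K_n (necessarily bijections from vertices to colors), there exist proper τ-colorings ψ₀ = φ₁, ψ₁, ψ₂ = φ₂ (possibly with ψ₁ = φ₂) such that each difference X(ψ_{j+1}) − X(ψ_j) is a circuit of the fractional coloring polytope, i.e., its difference graph (V(s),E(s)) is connected. -/
/-- A step from `φ` to `ψ` is a circuit step if the colorings differ and the difference
graph of `X(ψ) - X(φ)` is connected on its support. -/
def CircuitStep (n : ℕ) (φ ψ : Fin n → Fin n) : Prop :=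
  φ ≠ ψ ∧ ∀ u w : Fin n,
    (∃ i, dv φ ψ (u, i) ≠ 0) → (∃ i, dv φ ψ (w, i) ≠ 0) →
    (diffGraph (SimpleGraph.completeGraph (Fin n)) (dv φ ψ)).Reachable u w



open Equiv Equiv.Perm List

variable {α : Type*} [DecidableEq α] [Fintype α]

set_option linter.unusedSectionVars false

private lemma swap_shift {x y z : α} (hxy : x ≠ y) (hyz : y ≠ z) (hxz : x ≠ z) :
    Equiv.swap x z * Equiv.swap z y = Equiv.swap x y * Equiv.swap x z := by
  ext w
  simp only [Equiv.Perm.mul_apply, Equiv.swap_apply_def]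
  split_ifs <;> simp_all

private lemma formPerm_append (x y : α) (l₁ l₂ : List α)
    (h : ((x :: l₁) ++ (y :: l₂)).Nodup) :
    ((x :: l₁) ++ (y :: l₂)).formPerm =
      Equiv.swap x y * (x :: l₁).formPerm * (y :: l₂).formPerm := by
  induction l₁ generalizing x with
  | nil =>
      simp [List.formPerm_cons_cons, List.formPerm_singleton]
  | cons z s ih =>
      have h' : ((z :: s) ++ (y :: l₂)).Nodup := h.of_cons
      have hxz : x ≠ z := by
        have := h.notMem; simp at this; tauto
      have hxy : x ≠ y := by
        have := h.notMem; simp at this; tauto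
      have hzy : z ≠ y := by
        have := h'.notMem; simp at this; tauto
      have e1 : ((x :: z :: s) ++ (y :: l₂)).formPerm
          = Equiv.swap x z * ((z :: s) ++ (y :: l₂)).formPerm :=
        List.formPerm_cons_cons x z (s ++ y :: l₂)
      rw [e1, ih z h', List.formPerm_cons_cons x z,
        ← mul_assoc, ← mul_assoc, swap_shift hxy hzy.symm hxz]
      group

private lemma toList_cons_tail (p : Equiv.Perm α) {x : α} (hx : x ∈ p.support) :
    p.toList x = x :: (p.toList x).tail := by
  have h := Equiv.Perm.length_toList_pos_of_mem_support p x hx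
  cases hL : p.toList x with
  | nil => rw [hL] at h; simp at h
  | cons a t =>
      have h0 := Equiv.Perm.toList_getElem_zero (p := p) (x := x) hx
      simp [hL] at h0
      rw [h0]
      rfl

private lemma mem_support_of_mem_toList (p : Equiv.Perm α) {x y : α}
    (hx : x ∈ p.support) (hy : y ∈ p.toList x) : y ∈ p.support := by
  rw [Equiv.Perm.mem_toList_iff] at hy
  obtain ⟨⟨k, rfl⟩, hx'⟩ := hy
  exact (Equiv.Perm.zpow_apply_mem_support).mpr hx

private lemma two_le_len (p : Equiv.Perm α) {x : α} (hx : x ∈ p.support) :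
    2 ≤ (p.toList x).length :=
  Equiv.Perm.two_le_length_toList_iff_mem_support.mpr hx

/-- merging a new point into a cycle -/
private lemma isCycle_swap_mul_of_isCycle {d : Equiv.Perm α} (hd : d.IsCycle) {u v : α}
    (hu : u ∉ d.support) (hv : v ∈ d.support) : (Equiv.swap u v * d).IsCycle := by
  have hform : (d.toList v).formPerm = d := by
    rw [Equiv.Perm.formPerm_toList, hd.cycleOf_eq (Equiv.Perm.mem_support.mp hv)]
  have hud : u ∉ d.toList v := fun hmem => hu (mem_support_of_mem_toList d hv hmem)
  have hnodup : (u :: d.toList v).Nodup := List.nodup_cons.mpr ⟨hud, Equiv.Perm.nodup_toList d v⟩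
  have hkey : Equiv.swap u v * d = (u :: d.toList v).formPerm := by
    conv_lhs => rw [← hform]
    rw [toList_cons_tail d hv, List.formPerm_cons_cons]
  rw [hkey]
  apply List.isCycle_formPerm hnodup
  simp only [List.length_cons]
  have := two_le_len d hv
  omega

/-- merging two disjoint cycles with a transposition -/
private lemma isCycle_swap_mul_mul {e c : Equiv.Perm α} (he : e.IsCycle) (hc : c.IsCycle)
    (hd : e.Disjoint c) {x y : α} (hx : x ∈ e.support) (hy : y ∈ c.support) :
    (Equiv.swap x y * e * c).IsCycle ∧
      (Equiv.swap x y * e * c).support = e.support ∪ c.support := by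
  have hfe : (e.toList x).formPerm = e := by
    rw [Equiv.Perm.formPerm_toList, he.cycleOf_eq (Equiv.Perm.mem_support.mp hx)]
  have hfc : (c.toList y).formPerm = c := by
    rw [Equiv.Perm.formPerm_toList, hc.cycleOf_eq (Equiv.Perm.mem_support.mp hy)]
  have hdisj : _root_.Disjoint e.support c.support :=
    Equiv.Perm.disjoint_iff_disjoint_support.mp hd
  have hnodup : (e.toList x ++ c.toList y).Nodup := by
    rw [List.nodup_append]
    refine ⟨Equiv.Perm.nodup_toList e x, Equiv.Perm.nodup_toList c y, ?_⟩
    intro a ha b hb hab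
    subst hab
    exact (Finset.disjoint_left.mp hdisj) (mem_support_of_mem_toList e hx ha)
      (mem_support_of_mem_toList c hy hb)
  have hkey : Equiv.swap x y * e * c = (e.toList x ++ c.toList y).formPerm := by
    conv_lhs => rw [← hfe, ← hfc]
    rw [toList_cons_tail e hx, toList_cons_tail c hy, formPerm_append, mul_assoc]
    rw [← toList_cons_tail e hx, ← toList_cons_tail c hy]
    exact hnodup
  have hlen : 2 ≤ (e.toList x ++ c.toList y).length := by
    rw [List.length_append]
    have := two_le_len e hx
    omega
  have hns : ∀ z : α, e.toList x ++ c.toList y ≠ [z] := by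
    intro z hz
    have h1 := congrArg List.length hz
    rw [List.length_append, List.length_singleton] at h1
    have h2 := two_le_len e hx
    omega
  have hnse : ∀ z : α, e.toList x ≠ [z] := by
    intro z hz
    have h1 := congrArg List.length hz
    rw [List.length_singleton] at h1
    have h2 := two_le_len e hx
    omega
  have hnsc : ∀ z : α, c.toList y ≠ [z] := by
    intro z hz
    have h1 := congrArg List.length hz
    rw [List.length_singleton] at h1
    have h2 := two_le_len c hy
    omega
  have hse : e.support = (e.toList x).toFinset := by
    conv_lhs => rw [← hfe]
    rw [List.support_formPerm_of_nodup _ (Equiv.Perm.nodup_toList e x) hnse]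
  have hsc : c.support = (c.toList y).toFinset := by
    conv_lhs => rw [← hfc]
    rw [List.support_formPerm_of_nodup _ (Equiv.Perm.nodup_toList c y) hnsc]
  constructor
  · rw [hkey]; exact List.isCycle_formPerm hnodup hlen
  · rw [hkey, List.support_formPerm_of_nodup _ hnodup hns, List.toFinset_append, hse, hsc]

private lemma fix_of_not_mem_support {p : Equiv.Perm α} {y : α} (h : y ∉ p.support) :
    p y = y ∧ p⁻¹ y = y := by
  have h1 : p y = y := Equiv.Perm.notMem_support.mp h
  exact ⟨h1, by rw [Equiv.Perm.inv_eq_iff_eq]; exact h1.symm⟩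

private lemma inv_apply_mem_support {p : Equiv.Perm α} {a : α} (h : a ∈ p.support) :
    p⁻¹ a ∈ p.support := by
  rw [← Equiv.Perm.apply_mem_support, show p (p⁻¹ a) = a from (Equiv.eq_symm_apply p).mp rfl]
  exact h

private lemma conj_swap_eq (X : Equiv.Perm α) (a b : α) :
    X⁻¹ * Equiv.swap a b * X = Equiv.swap (X⁻¹ a) (X⁻¹ b) ∧
    Equiv.swap a b * X * (X⁻¹ * Equiv.swap a b * X) = X := by
  constructor
  · have := Equiv.swap_apply_apply X⁻¹ a b
    rw [inv_inv] at this
    exact this.symm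
  · simp [mul_assoc, mul_inv_cancel_left, Equiv.swap_mul_self_mul]

private lemma exists_two_cycles_aux (g : Equiv.Perm α) :
    ∃ c d : Equiv.Perm α, (c = 1 ∨ (c.IsCycle ∧ c.support = g.support)) ∧
      (d = 1 ∨ (d.IsCycle ∧ d.support ⊆ g.support)) ∧ g = c * d := by
  induction g using Equiv.Perm.cycle_induction_on with
  | base_one => exact ⟨1, 1, Or.inl rfl, Or.inl rfl, (one_mul 1).symm⟩
  | base_cycles σ hσ => exact ⟨σ, 1, Or.inr ⟨hσ, by simp⟩, Or.inl rfl, (mul_one σ).symm⟩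
  | induction_disjoint σ τ hdis hσ ihσ ihτ =>
      clear ihσ
      obtain ⟨c, d, hc, hd, hprod⟩ := ihτ
      have hστ : (σ * τ).support = σ.support ∪ τ.support := hdis.support_mul
      obtain ⟨a, ha⟩ := hσ.nonempty_support
      have ha' : σ⁻¹ a ∈ σ.support := inv_apply_mem_support ha
      -- the generic merge of two disjoint cycles σ and c₀
      have merge : ∀ c₀ : Equiv.Perm α, c₀.IsCycle → σ.Disjoint c₀ → ∀ b ∈ c₀.support,
          (Equiv.swap a b * σ * c₀).IsCycle ∧
          (Equiv.swap a b * σ * c₀).support = σ.support ∪ c₀.support ∧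
          σ * c₀ = (Equiv.swap a b * σ * c₀) * Equiv.swap (σ⁻¹ a) (c₀⁻¹ b) := by
        intro c₀ hc₀ hdis₀ b hb
        have hmm := isCycle_swap_mul_mul hσ hc₀ hdis₀ ha hb
        have hXa : (σ * c₀)⁻¹ a = σ⁻¹ a := by
          rw [mul_inv_rev, Equiv.Perm.mul_apply]
          exact (fix_of_not_mem_support (hdis₀.mem_imp ha')).2
        have hXb : (σ * c₀)⁻¹ b = c₀⁻¹ b := by
          rw [mul_inv_rev, Equiv.Perm.mul_apply,
            (fix_of_not_mem_support (fun hmem => (hdis₀.mem_imp hmem) hb)).2]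
        have hcs := conj_swap_eq (σ * c₀) a b
        refine ⟨hmm.1, hmm.2, ?_⟩
        have h2 := hcs.2
        rw [hcs.1, hXa, hXb, ← mul_assoc] at h2
        exact h2.symm
      have mergefull : ∀ c₀ : Equiv.Perm α, c₀.IsCycle → c₀.support = τ.support →
          ∀ d₀ : Equiv.Perm α, (d₀ = 1 ∨ (d₀.IsCycle ∧ d₀.support ⊆ τ.support)) →
          τ = c₀ * d₀ →
          ∃ c₁ d₁ : Equiv.Perm α, (c₁ = 1 ∨ (c₁.IsCycle ∧ c₁.support = (σ * τ).support)) ∧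
            (d₁ = 1 ∨ (d₁.IsCycle ∧ d₁.support ⊆ (σ * τ).support)) ∧ σ * τ = c₁ * d₁ := by
        intro c₀ hc₀ hc₀supp d₀ hd₀ hτ
        have hdisc : σ.Disjoint c₀ := by
          rw [Equiv.Perm.disjoint_iff_disjoint_support, hc₀supp]
          exact Equiv.Perm.disjoint_iff_disjoint_support.mp hdis
        rcases hd₀ with rfl | ⟨hd₀cyc, hd₀supp⟩
        · -- τ = c₀ : merge two disjoint cycles, leftover is a swap
          rw [mul_one] at hτ
          obtain ⟨b, hb⟩ := hc₀.nonempty_support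
          obtain ⟨h1, h2, h3⟩ := merge c₀ hc₀ hdisc b hb
          have hb' : c₀⁻¹ b ∈ c₀.support := inv_apply_mem_support hb
          have hne : σ⁻¹ a ≠ c₀⁻¹ b := by
            intro heq
            rw [heq] at ha'
            exact (hdisc.mem_imp ha') hb'
          refine ⟨Equiv.swap a b * σ * c₀, Equiv.swap (σ⁻¹ a) (c₀⁻¹ b),
            Or.inr ⟨h1, by rw [h2, hστ, hc₀supp]⟩,
            Or.inr ⟨Equiv.Perm.isCycle_swap hne, ?_⟩, by rw [hτ]; exact h3⟩
          rw [Equiv.Perm.support_swap hne, hστ, ← hc₀supp]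
          intro z hz
          simp only [Finset.mem_insert, Finset.mem_singleton] at hz
          rcases hz with rfl | rfl
          · exact Finset.mem_union_left _ ha'
          · exact Finset.mem_union_right _ hb'
        · -- τ = c₀ * d₀ with d₀ a cycle inside supp c₀
          obtain ⟨z, hz⟩ := hd₀cyc.nonempty_support
          have hzc : z ∈ c₀.support := by rw [hc₀supp]; exact hd₀supp hz
          have hb : c₀ z ∈ c₀.support := Equiv.Perm.apply_mem_support.mpr hzc
          obtain ⟨h1, h2, h3⟩ := merge c₀ hc₀ hdisc (c₀ z) hb
          rw [show c₀⁻¹ (c₀ z) = z from Equiv.Perm.inv_eq_iff_eq.mpr rfl] at h3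
          have hand : σ⁻¹ a ∉ d₀.support := by
            intro hmem
            exact (hdis.mem_imp ha') (hd₀supp hmem)
          have hd₁ : (Equiv.swap (σ⁻¹ a) z * d₀).IsCycle :=
            isCycle_swap_mul_of_isCycle hd₀cyc hand hz
          refine ⟨Equiv.swap a (c₀ z) * σ * c₀, Equiv.swap (σ⁻¹ a) z * d₀,
            Or.inr ⟨h1, by rw [h2, hστ, hc₀supp]⟩, Or.inr ⟨hd₁, ?_⟩, ?_⟩
          · have hne : σ⁻¹ a ≠ z := fun heq => hand (heq ▸ hz)
            intro w hw
            have := Equiv.Perm.support_mul_le (Equiv.swap (σ⁻¹ a) z) d₀ hw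
            rw [hστ]
            simp only [Finset.sup_eq_union, Finset.mem_union,
              Equiv.Perm.support_swap hne, Finset.mem_insert, Finset.mem_singleton] at this
            rcases this with (rfl | rfl) | hmem
            · exact Finset.mem_union_left _ ha'
            · exact Finset.mem_union_right _ (hd₀supp hz)
            · exact Finset.mem_union_right _ (hd₀supp hmem)
          · rw [hτ, ← mul_assoc, h3, mul_assoc]
      rcases hc with rfl | ⟨hccyc, hcsupp⟩
      · rw [one_mul] at hprod
        subst hprod
        rcases hd with rfl | ⟨hdcyc, hdsupp⟩
        · exact ⟨σ, 1, Or.inr ⟨hσ, by rw [mul_one]⟩, Or.inl rfl, (mul_one σ).symm⟩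
        · exact mergefull τ hdcyc rfl 1 (Or.inl rfl) (mul_one τ).symm
      · exact mergefull c hccyc hcsupp d hd hprod

private lemma exists_two_cycles (g : Equiv.Perm α) :
    ∃ c d : Equiv.Perm α, (c = 1 ∨ c.IsCycle) ∧ (d = 1 ∨ d.IsCycle) ∧ g = c * d := by
  obtain ⟨c, d, h1, h2, h3⟩ := exists_two_cycles_aux g
  exact ⟨c, d, h1.imp id And.left, h2.imp id And.left, h3⟩

private lemma stepB {n : ℕ} (φ ψ : Fin n → Fin n) (hφ : Function.Injective φ)
    (hψ : Function.Injective ψ) (f : Equiv.Perm (Fin n)) (hf : ∀ u, φ (f u) = ψ u)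
    (hcyc : f = 1 ∨ f.IsCycle) : φ = ψ ∨ CircuitStep n φ ψ := by
  rcases hcyc with rfl | hcyc
  · exact Or.inl (funext fun u => hf u)
  right
  have hne : ∀ u : Fin n, f u ≠ u → φ u ≠ ψ u := by
    intro u hu heq
    exact hu (hφ (by rw [hf u, ← heq]))
  have hsup : ∀ u : Fin n, (∃ i, dv φ ψ (u, i) ≠ 0) ↔ f u ≠ u := by
    intro u
    constructor
    · rintro ⟨i, hi⟩ hu
      apply hi
      have : ψ u = φ u := by rw [← hf u, hu]
      simp [dv, this]
    · intro hu
      refine ⟨ψ u, ?_⟩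
      have h1 := hne u hu
      simp [dv, fun h : φ u = ψ u => h1 h]
  have hadj : ∀ u : Fin n, f u ≠ u →
      (diffGraph (SimpleGraph.completeGraph (Fin n)) (dv φ ψ)).Adj u (f u) := by
    intro u hu
    refine ⟨Ne.symm hu, ψ u, ?_, ?_⟩
    · have h1 : φ u ≠ ψ u := hne u hu
      have h2 : ψ (f u) ≠ ψ u := fun h => hu (hψ h)
      simp [dv, fun h : φ u = ψ u => h1 h, h2, hf u]
    · have h1 : φ u ≠ ψ u := hne u hu
      simp [dv, fun h : φ u = ψ u => h1 h]
  have hreach : ∀ (k : ℕ) (u : Fin n), f u ≠ u →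
      (diffGraph (SimpleGraph.completeGraph (Fin n)) (dv φ ψ)).Reachable u ((f ^ k) u) := by
    intro k
    induction k with
    | zero => intro u _; simpa using SimpleGraph.Reachable.refl u
    | succ k ih =>
        intro u hu
        have h2 : f (f u) ≠ f u := fun h => hu (f.injective h)
        have h3 : (f ^ (k + 1)) u = (f ^ k) (f u) := by
          rw [pow_succ, Equiv.Perm.mul_apply]
        rw [h3]
        exact ((hadj u hu).reachable).trans (ih (f u) h2)
  constructor
  · intro heq
    obtain ⟨u, hu, -⟩ := hcyc
    exact hne u hu (by rw [heq])
  · intro u w h1 h2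
    rw [hsup] at h1 h2
    obtain ⟨k, hk⟩ := hcyc.exists_pow_eq h1 h2
    rw [← hk]
    exact hreach k u h1

/-- On `K_n` with exactly `n` colors, any two proper colorings are joined by a proper
walk of length at most two: there is an intermediate proper coloring `ψ` such that each
consecutive difference is either zero or a circuit of the fractional coloring polytope. -/
theorem stmt7 (n : ℕ) (φ₁ φ₂ : Fin n → Fin n)
    (h₁ : Function.Injective φ₁) (h₂ : Function.Injective φ₂) :
    ∃ ψ : Fin n → Fin n, Function.Injective ψ ∧
      (φ₁ = ψ ∨ CircuitStep n φ₁ ψ) ∧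
      (ψ = φ₂ ∨ CircuitStep n ψ φ₂) := by
  have hb₁ : Function.Bijective φ₁ := Finite.injective_iff_bijective.mp h₁
  have hb₂ : Function.Bijective φ₂ := Finite.injective_iff_bijective.mp h₂
  set p₁ := Equiv.ofBijective φ₁ hb₁ with hp₁
  set p₂ := Equiv.ofBijective φ₂ hb₂ with hp₂
  obtain ⟨c, d, hc, hd, hg⟩ := exists_two_cycles (p₁⁻¹ * p₂)
  refine ⟨fun u => φ₁ (c u), h₁.comp c.injective, ?_, ?_⟩
  · exact stepB φ₁ _ h₁ (h₁.comp c.injective) c (fun u => rfl) hc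
  · refine stepB _ φ₂ (h₁.comp c.injective) h₂ d (fun u => ?_) hd
    show φ₁ (c (d u)) = φ₂ u
    have h5 : c (d u) = (p₁⁻¹ * p₂) u := by rw [hg]; rfl
    rw [h5]
    show p₁ (p₁⁻¹ (p₂ u)) = φ₂ u
    rw [show p₁ (p₁⁻¹ (p₂ u)) = p₂ u from (Equiv.eq_symm_apply p₁).mp rfl]
    rfl
end

section
/- Let G = (V,E) be a simple graph, B the rank-inequality matrix with rows ∑_{e ∈ E(G[U])} x(e) over all nonempty U ⊆ V, and g : E → ℝ a mixed-sign vector. If there exists λ ≥ 0 and an edge e ∈ supp(g) such that y = g − λ·1_e satisfies supp(By) ⊊ supp(Bg), then e is contained in no balanced set, where U ⊆ V is balanced (w.r.t. g) if ∑_{f ∈ E(G[U])} g(f) = 0. Conversely, if an edge e ∈ supp(g) lies in no balanced set, then dropping e (setting its entry to 0) yields a vector of strictly reduced support with respect to B. -/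
/-- The row of the rank-inequality matrix indexed by `U ⊆ V`, applied to `g`:
`∑_{e ∈ E(G[U])} g(e)`. -/
def rowSum {V : Type*} [Fintype V] [DecidableEq V] (G : SimpleGraph V) [DecidableRel G.Adj]
    (g : G.edgeSet → ℝ) (U : Finset V) : ℝ :=
  ∑ e : G.edgeSet, if ∀ v ∈ (e : Sym2 V), v ∈ U then g e else 0

/-- The support of `B g` for the rank-inequality matrix `B`: the nonempty sets `U` whose
rank row evaluates to a nonzero value on `g`. -/
def Bsupp {V : Type*} [Fintype V] [DecidableEq V] (G : SimpleGraph V) [DecidableRel G.Adj]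
    (g : G.edgeSet → ℝ) : Set (Finset V) :=
  {U | U.Nonempty ∧ rowSum G g U ≠ 0}

/-- A circuit of the rank-inequality system: a nonzero vector `g` such that `B g` is
support-minimal over `{B x : x ≠ 0}`. -/
def IsCircuit {V : Type*} [Fintype V] [DecidableEq V] (G : SimpleGraph V) [DecidableRel G.Adj]
    (g : G.edgeSet → ℝ) : Prop :=
  g ≠ 0 ∧ ∀ y : G.edgeSet → ℝ, y ≠ 0 → ¬ Bsupp G y ⊂ Bsupp G g

/-- The unit vector supported on the edge `e`. -/
def unitVec {V : Type*} [DecidableEq V] (G : SimpleGraph V) (e : G.edgeSet) :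
    G.edgeSet → ℝ :=
  fun f => if f = e then 1 else 0

/-- The spanning subgraph of `G` with edge set `R`. -/
def edgeSub {V : Type*} (G : SimpleGraph V) (R : Set G.edgeSet) : SimpleGraph V where
  Adj u v := u ≠ v ∧ ∃ e ∈ R, (e : Sym2 V) = s(u, v)
  symm := ⟨by
    rintro u v ⟨huv, e, heR, he⟩
    exact ⟨huv.symm, e, heR, by rw [he, Sym2.eq_swap]⟩⟩
  loopless := ⟨by rintro v ⟨hv, _⟩; exact hv rfl⟩


lemma rowSum_sub {V : Type*} [Fintype V] [DecidableEq V] (G : SimpleGraph V)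
    [DecidableRel G.Adj] (g : G.edgeSet → ℝ) (e : G.edgeSet) (lam : ℝ) (U : Finset V) :
    rowSum G (g - lam • unitVec G e) U =
      rowSum G g U - (if ∀ v ∈ (e : Sym2 V), v ∈ U then lam else 0) := by
  unfold rowSum unitVec
  have key : ∀ f : G.edgeSet,
      (if ∀ v ∈ (f : Sym2 V), v ∈ U then (g - lam • fun f => if f = e then (1:ℝ) else 0) f else 0)
      = (if ∀ v ∈ (f : Sym2 V), v ∈ U then g f else 0)
        - (if f = e then (if ∀ v ∈ (e : Sym2 V), v ∈ U then lam else 0) else 0) := by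
    intro f
    by_cases hfe : f = e
    · subst hfe
      by_cases h : ∀ v ∈ (f : Sym2 V), v ∈ U
      · simp only [if_pos h, Pi.sub_apply, Pi.smul_apply, if_pos rfl, smul_eq_mul, mul_one]
        simp
      · simp only [if_neg h, sub_zero]
        simp
    · by_cases h : ∀ v ∈ (f : Sym2 V), v ∈ U <;> simp [h, hfe]
  simp only [key, Finset.sum_sub_distrib, Finset.sum_ite_eq' Finset.univ e,
    Finset.mem_univ, if_true]

lemma rowSum_pair {V : Type*} [Fintype V] [DecidableEq V] (G : SimpleGraph V)
    [DecidableRel G.Adj] (g : G.edgeSet → ℝ) (e : G.edgeSet) (u v : V)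
    (huv : (e : Sym2 V) = s(u, v)) :
    rowSum G g ({u, v} : Finset V) = g e := by
  unfold rowSum
  have key : ∀ f : G.edgeSet,
      (if ∀ w ∈ (f : Sym2 V), w ∈ ({u, v} : Finset V) then g f else 0)
      = (if f = e then g f else 0) := by
    intro f
    congr 1
    simp only [eq_iff_iff]
    constructor
    · intro hf
      obtain ⟨a, b, hab⟩ := Sym2.exists.mp (⟨(f : Sym2 V), rfl⟩ : ∃ z, (f : Sym2 V) = z)
      have hne : a ≠ b := by
        intro h
        have := f.2
        rw [hab, h] at this
        exact G.loopless.irrefl b this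
      have ha : a ∈ ({u, v} : Finset V) := hf a (by rw [hab]; simp)
      have hb : b ∈ ({u, v} : Finset V) := hf b (by rw [hab]; simp)
      simp only [Finset.mem_insert, Finset.mem_singleton] at ha hb
      apply Subtype.ext
      rw [hab, huv]
      rcases ha with ha | ha <;> rcases hb with hb | hb <;> subst ha <;> subst hb
      · exact absurd rfl hne
      · rfl
      · exact Sym2.eq_swap
      · exact absurd rfl hne
    · rintro rfl w hw
      rw [huv] at hw
      rcases Sym2.mem_iff.mp hw with rfl | rfl <;> simp
  simp only [key, Finset.sum_ite_eq' Finset.univ e, Finset.mem_univ, if_true]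

/-- Lemma on single-edge drops: for a mixed-sign vector `g`, dropping a scaled unit
vector on edge `e` strictly reduces the support (w.r.t. the rank matrix `B`) only if `e`
is contained in no balanced set, and conversely an edge in no balanced set can be
dropped to reduce the support. -/
theorem stmt9 {V : Type*} [Fintype V] [DecidableEq V] (G : SimpleGraph V)
    [DecidableRel G.Adj] (g : G.edgeSet → ℝ)
    (hmix : (∃ e, 0 < g e) ∧ (∃ e, g e < 0)) :
    (∀ (e : G.edgeSet) (lam : ℝ), 0 ≤ lam → g e ≠ 0 →
      Bsupp G (g - lam • unitVec G e) ⊂ Bsupp G g →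
      ∀ U : Finset V, (∀ v ∈ (e : Sym2 V), v ∈ U) → rowSum G g U ≠ 0) ∧
    (∀ e : G.edgeSet, g e ≠ 0 →
      (∀ U : Finset V, (∀ v ∈ (e : Sym2 V), v ∈ U) → rowSum G g U ≠ 0) →
      Bsupp G (fun f => if f = e then 0 else g f) ⊂ Bsupp G g) := by
  constructor
  · intro e lam hlam hge hss U hU
    intro hzero
    obtain ⟨u, v, huv⟩ := Sym2.exists.mp (⟨(e : Sym2 V), rfl⟩ : ∃ z, (e : Sym2 V) = z)
    have hUne : U.Nonempty := ⟨u, hU u (by rw [huv]; simp)⟩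
    rcases eq_or_lt_of_le hlam with rfl | hpos
    · rw [zero_smul, sub_zero] at hss
      exact (lt_irrefl _) hss
    · have hUy : U ∈ Bsupp G (g - lam • unitVec G e) := by
        refine ⟨hUne, ?_⟩
        rw [rowSum_sub, hzero, if_pos hU]
        simpa using (ne_of_gt hpos)
      exact (hss.1 hUy).2 hzero
  · intro e hge hbal
    obtain ⟨u, v, huv⟩ := Sym2.exists.mp (⟨(e : Sym2 V), rfl⟩ : ∃ z, (e : Sym2 V) = z)
    have hy : (fun f => if f = e then 0 else g f) = g - (g e) • unitVec G e := by
      funext f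
      by_cases hf : f = e <;> simp [hf, unitVec]
    rw [hy]
    constructor
    · rintro U ⟨hUne, hUr⟩
      refine ⟨hUne, ?_⟩
      rw [rowSum_sub] at hUr
      by_cases hU : ∀ w ∈ (e : Sym2 V), w ∈ U
      · exact hbal U hU
      · rw [if_neg hU, sub_zero] at hUr
        exact hUr
    · intro hsub
      have hmem : ({u, v} : Finset V) ∈ Bsupp G (g - g e • unitVec G e) := by
        apply hsub
        refine ⟨⟨u, by simp⟩, ?_⟩
        rw [rowSum_pair G g e u v huv]
        exact hge
      have := hmem.2
      rw [rowSum_sub, rowSum_pair G g e u v huv, if_pos, sub_self] at this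
      · exact this rfl
      · intro w hw
        rw [huv] at hw
        rcases Sym2.mem_iff.mp hw with rfl | rfl <;> simp
end

section
/- Let G = (V,E) be a graph on at least 4 vertices admitting a spanning forest F with |F| ≥ 3, and let P be the maximum weight forest polytope of G. Then any circuit walk in P from the zero vector to X(F) has length at least 3; hence the circuit diameter of P is at least 3. -/
/-- The maximum weight forest polytope of `G`. -/
def MWF {V : Type*} [Fintype V] [DecidableEq V] (G : SimpleGraph V) [DecidableRel G.Adj] :
    Set (G.edgeSet → ℝ) :=
  {x | (∀ e, 0 ≤ x e) ∧ ∀ U : Finset V, U.Nonempty → rowSum G x U ≤ (U.card : ℝ) - 1}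

/-- The characteristic vector of an edge set `F`. -/
def chiVec {V : Type*} [DecidableEq V] (G : SimpleGraph V) (F : Finset G.edgeSet) :
    G.edgeSet → ℝ :=
  fun e => if e ∈ F then 1 else 0

/-- A maximal step of a circuit walk in the maximum weight forest polytope. -/
def IsMaxStep {V : Type*} [Fintype V] [DecidableEq V] (G : SimpleGraph V)
    [DecidableRel G.Adj] (x x' : G.edgeSet → ℝ) : Prop :=
  ∃ (gdir : G.edgeSet → ℝ) (eps : ℝ), IsCircuit G gdir ∧ 0 < eps ∧
    x' = x + eps • gdir ∧ ∀ eps' : ℝ, eps < eps' → x + eps' • gdir ∉ MWF G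

/-- A circuit walk in the maximum weight forest polytope. -/
def IsCircuitWalk {V : Type*} [Fintype V] [DecidableEq V] (G : SimpleGraph V)
    [DecidableRel G.Adj] (k : ℕ) (x : Fin (k + 1) → G.edgeSet → ℝ) : Prop :=
  (∀ i, x i ∈ MWF G) ∧ ∀ i : Fin k, IsMaxStep G (x i.castSucc) (x i.succ)

section Helpers

variable {V : Type*} [Fintype V] [DecidableEq V] (G : SimpleGraph V) [DecidableRel G.Adj]

lemma rowSum_sub_s18 (a b : G.edgeSet → ℝ) (U : Finset V) :
    rowSum G (a - b) U = rowSum G a U - rowSum G b U := by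
  unfold rowSum
  rw [← Finset.sum_sub_distrib]
  refine Finset.sum_congr rfl fun e _ => ?_
  split_ifs <;> simp [Pi.sub_apply]

lemma rowSum_smul (c : ℝ) (a : G.edgeSet → ℝ) (U : Finset V) :
    rowSum G (c • a) U = c * rowSum G a U := by
  unfold rowSum
  rw [Finset.mul_sum]
  refine Finset.sum_congr rfl fun e _ => ?_
  split_ifs <;> simp

lemma rowSum_unit (e : G.edgeSet) (U : Finset V) :
    rowSum G (unitVec G e) U = if (∀ v ∈ (e : Sym2 V), v ∈ U) then 1 else 0 := by
  unfold rowSum unitVec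
  rw [show (∑ f : G.edgeSet, if (∀ v ∈ (f : Sym2 V), v ∈ U) then (if f = e then (1:ℝ) else 0) else 0)
      = ∑ f : G.edgeSet, if f = e then (if (∀ v ∈ (e : Sym2 V), v ∈ U) then (1:ℝ) else 0) else 0 from
    Finset.sum_congr rfl fun f _ => by
      by_cases hfe : f = e
      · subst hfe; simp
      · simp [hfe]]
  simp [Finset.sum_ite_eq']

lemma rowSum_chi (F : Finset G.edgeSet) (U : Finset V) :
    rowSum G (chiVec G F) U
      = ((Finset.univ.filter (fun e : G.edgeSet => e ∈ F ∧ ∀ v ∈ (e : Sym2 V), v ∈ U)).card : ℝ) := by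
  unfold rowSum chiVec
  rw [show (∑ e : G.edgeSet, if (∀ v ∈ (e : Sym2 V), v ∈ U) then (if e ∈ F then (1:ℝ) else 0) else 0)
      = ∑ e : G.edgeSet, if (e ∈ F ∧ ∀ v ∈ (e : Sym2 V), v ∈ U) then (1:ℝ) else 0 from
    Finset.sum_congr rfl fun e _ => by split_ifs <;> tauto]
  rw [Finset.sum_boole]

/-- If `y` has row-support contained in that of `g` but is not a multiple of `g`,
then `g` is not a circuit. -/
lemma notCircuit_of_indep (g y : G.edgeSet → ℝ)
    (hsub : Bsupp G y ⊆ Bsupp G g)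
    (hindep : ∀ c : ℝ, y ≠ c • g)
    (hne : (Bsupp G g).Nonempty) : ¬ IsCircuit G g := by
  rintro ⟨hg0, hmin⟩
  obtain ⟨U0, hU0ne, hU0row⟩ := hne
  set c := rowSum G y U0 / rowSum G g U0 with hc
  refine hmin (y - c • g) (fun h => hindep c (by rwa [sub_eq_zero] at h)) ?_
  rw [ssubset_iff_subset_not_subset]
  constructor
  · rintro U ⟨hUne, hUrow⟩
    refine ⟨hUne, ?_⟩
    rw [rowSum_sub_s18, rowSum_smul] at hUrow
    by_contra h0
    have hyU : rowSum G y U = 0 := by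
      by_contra hy
      exact (hsub ⟨hUne, hy⟩).2 h0
    rw [hyU, h0, mul_zero, sub_zero] at hUrow
    exact hUrow rfl
  · intro hba
    obtain ⟨-, hr⟩ := hba ⟨hU0ne, hU0row⟩
    apply hr
    rw [rowSum_sub_s18, rowSum_smul, hc, div_mul_cancel₀ _ hU0row, sub_self]

/-- Master lemma: if there are two distinct edges `f ≠ f1` with `g f1 ≠ 0` and every
vertex set containing the endpoints of `f` has nonzero row sum, then `g` is not a circuit. -/
lemma notCircuit_master [Nonempty V] (g : G.edgeSet → ℝ) (f f1 : G.edgeSet)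
    (h1 : f1 ≠ f) (h2 : g f1 ≠ 0)
    (hrow : ∀ U : Finset V, (∀ w ∈ (f : Sym2 V), w ∈ U) → rowSum G g U ≠ 0) :
    ¬ IsCircuit G g := by
  refine notCircuit_of_indep G g (unitVec G f) ?_ ?_ ?_
  · rintro U ⟨hUne, hUrow⟩
    refine ⟨hUne, ?_⟩
    rw [rowSum_unit] at hUrow
    by_cases h : ∀ w ∈ (f : Sym2 V), w ∈ U
    · exact hrow U h
    · simp [h] at hUrow
  · intro c h
    have hf1 : unitVec G f f1 = c * g f1 := by rw [h]; rfl
    have hf : unitVec G f f = c * g f := by rw [h]; rfl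
    rw [show unitVec G f f1 = 0 from if_neg h1] at hf1
    have hc : c = 0 := by
      rcases mul_eq_zero.mp hf1.symm with h' | h'
      · exact h'
      · exact absurd h' h2
    rw [show unitVec G f f = 1 from if_pos rfl, hc, zero_mul] at hf
    exact one_ne_zero hf
  · refine ⟨Finset.univ, Finset.univ_nonempty, hrow _ (fun w _ => Finset.mem_univ w)⟩

lemma edgeSub_adj (R : Set G.edgeSet) (a b : V) :
    (edgeSub G R).Adj a b ↔ a ≠ b ∧ ∃ e ∈ R, (e : Sym2 V) = s(a, b) := Iff.rfl

lemma rowSum_pos_of_nonneg (g : G.edgeSet → ℝ) (hg : ∀ e, 0 ≤ g e) (f : G.edgeSet)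
    (hf : 0 < g f) (U : Finset V) (hfU : ∀ w ∈ (f : Sym2 V), w ∈ U) :
    0 < rowSum G g U := by
  unfold rowSum
  refine Finset.sum_pos' (fun e _ => ?_) ⟨f, Finset.mem_univ f, ?_⟩
  · split_ifs with h
    · exact hg e
    · exact le_rfl
  · rw [if_pos hfU]; exact hf

lemma rowSum_chi_pos (F : Finset G.edgeSet) (f : G.edgeSet) (hfF : f ∈ F)
    (U : Finset V) (hfU : ∀ w ∈ (f : Sym2 V), w ∈ U) :
    0 < rowSum G (chiVec G F) U := by
  rw [rowSum_chi]
  have : f ∈ Finset.univ.filter (fun e : G.edgeSet => e ∈ F ∧ ∀ v ∈ (e : Sym2 V), v ∈ U) :=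
    Finset.mem_filter.mpr ⟨Finset.mem_univ f, hfF, hfU⟩
  have hcard : 0 < (Finset.univ.filter
      (fun e : G.edgeSet => e ∈ F ∧ ∀ v ∈ (e : Sym2 V), v ∈ U)).card :=
    Finset.card_pos.mpr ⟨f, this⟩
  exact_mod_cast hcard

lemma rowSum_d_pos (F : Finset G.edgeSet) (e1 f f0 : G.edgeSet)
    (hfF : f ∈ F) (hf0F : f0 ∈ F) (hff0 : f0 ≠ f)
    (hincl : ∀ U : Finset V, (∀ w ∈ (f : Sym2 V), w ∈ U) → (∀ w ∈ (e1 : Sym2 V), w ∈ U) →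
      ∀ w ∈ (f0 : Sym2 V), w ∈ U)
    (U : Finset V) (hfU : ∀ w ∈ (f : Sym2 V), w ∈ U) :
    0 < rowSum G (chiVec G F - unitVec G e1) U := by
  rw [rowSum_sub_s18, rowSum_chi, rowSum_unit]
  set S := Finset.univ.filter (fun e : G.edgeSet => e ∈ F ∧ ∀ v ∈ (e : Sym2 V), v ∈ U) with hS
  have hfS : f ∈ S := Finset.mem_filter.mpr ⟨Finset.mem_univ f, hfF, hfU⟩
  by_cases he1 : ∀ w ∈ (e1 : Sym2 V), w ∈ U
  · rw [if_pos he1]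
    have hf0S : f0 ∈ S := Finset.mem_filter.mpr ⟨Finset.mem_univ f0, hf0F, hincl U hfU he1⟩
    have h2 : 1 < S.card := Finset.one_lt_card.mpr ⟨f, hfS, f0, hf0S, hff0.symm⟩
    have : (2 : ℝ) ≤ (S.card : ℝ) := by exact_mod_cast h2
    linarith
  · rw [if_neg he1]
    have h1 : 0 < S.card := Finset.card_pos.mpr ⟨f, hfS⟩
    have : (1 : ℝ) ≤ (S.card : ℝ) := by exact_mod_cast h1
    linarith

lemma exists_two_edges {H : SimpleGraph V} {u v : V} (hne : u ≠ v)
    (hnadj : ¬ H.Adj u v) (hr : H.Reachable u v) :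
    ∃ b c : V, u ≠ c ∧ H.Adj u b ∧ H.Adj b c := by
  obtain ⟨w0⟩ := hr
  have hq := w0.bypass_isPath
  generalize w0.bypass = q at hq
  cases q with
  | nil => exact absurd rfl hne
  | cons h q' =>
    cases q' with
    | nil => exact absurd h hnadj
    | cons h' q'' =>
      refine ⟨_, _, ?_, h, h'⟩
      intro huc
      rw [SimpleGraph.Walk.cons_isPath_iff] at hq
      apply hq.2
      rw [SimpleGraph.Walk.support_cons]
      refine List.mem_cons_of_mem _ ?_
      rw [huc]
      exact SimpleGraph.Walk.start_mem_support _

lemma unitVec_mem_MWF (e : G.edgeSet) : unitVec G e ∈ MWF G := by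
  constructor
  · intro f
    unfold unitVec
    split_ifs <;> norm_num
  · intro U hU
    rw [rowSum_unit]
    split_ifs with h
    · obtain ⟨⟨a, b⟩, hab⟩ := Quot.exists_rep (e : Sym2 V)
      have hab' : (e : Sym2 V) = s(a, b) := hab.symm
      have hadj : G.Adj a b := by
        have h2 := e.2
        rw [hab'] at h2
        exact G.mem_edgeSet.mp h2
      have haU : a ∈ U := h a (by rw [hab']; simp)
      have hbU : b ∈ U := h b (by rw [hab']; simp)
      have hsub : ({a, b} : Finset V) ⊆ U := by
        intro w hw
        rcases Finset.mem_insert.mp hw with rfl | hw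
        · exact haU
        · rw [Finset.mem_singleton.mp hw]; exact hbU
      have hcard2 : ({a, b} : Finset V).card = 2 := by
        rw [Finset.card_insert_of_notMem (by simpa using hadj.ne), Finset.card_singleton]
      have := Finset.card_le_card hsub
      rw [hcard2] at this
      have : (2 : ℝ) ≤ (U.card : ℝ) := by exact_mod_cast this
      linarith
    · have : 0 < U.card := Finset.card_pos.mpr hU
      have : (1 : ℝ) ≤ (U.card : ℝ) := by exact_mod_cast this
      linarith

lemma step_from_zero [Nonempty V] (x1 : G.edgeSet → ℝ)
    (hstep : IsMaxStep G 0 x1) (hx1 : x1 ∈ MWF G) :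
    ∃ e1 : G.edgeSet, x1 = unitVec G e1 := by
  obtain ⟨g, eps, hcirc, heps, hx1eq, hmax⟩ := hstep
  rw [zero_add] at hx1eq
  have hgnn : ∀ e, 0 ≤ g e := by
    intro e
    by_contra hneg
    push_neg at hneg
    have h1 := hx1.1 e
    rw [hx1eq] at h1
    have : eps * g e < 0 := mul_neg_of_pos_of_neg heps hneg
    simp only [Pi.smul_apply, smul_eq_mul] at h1
    linarith
  obtain ⟨e1, he1⟩ : ∃ e1, g e1 ≠ 0 := Function.ne_iff.mp hcirc.1
  have hgsupp : ∀ e, e ≠ e1 → g e = 0 := by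
    intro e hee1
    by_contra hge
    refine notCircuit_master G g e1 e hee1 hge ?_ hcirc
    intro U hU
    have := rowSum_pos_of_nonneg G g hgnn e1 (lt_of_le_of_ne (hgnn e1) (Ne.symm he1)) U hU
    linarith
  have hx1fun : x1 = (eps * g e1) • unitVec G e1 := by
    funext e
    rw [hx1eq]
    simp only [Pi.smul_apply, smul_eq_mul, unitVec]
    by_cases he : e = e1
    · subst he; simp
    · rw [hgsupp e he, if_neg he]; ring
  set cv : ℝ := eps * g e1 with hcv
  have hcvpos : 0 < cv := mul_pos heps (lt_of_le_of_ne (hgnn e1) (Ne.symm he1))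
  -- endpoints of e1
  obtain ⟨⟨a, b⟩, hab⟩ := Quot.exists_rep (e1 : Sym2 V)
  have hab' : (e1 : Sym2 V) = s(a, b) := hab.symm
  have hadj : G.Adj a b := by
    have h2 := e1.2
    rw [hab'] at h2
    exact G.mem_edgeSet.mp h2
  have hinU : ∀ w ∈ (e1 : Sym2 V), w ∈ ({a, b} : Finset V) := by
    intro w hw
    rw [hab', Sym2.mem_iff] at hw
    rcases hw with rfl | rfl
    · exact Finset.mem_insert_self _ _
    · exact Finset.mem_insert_of_mem (Finset.mem_singleton_self _)
  have hcard2 : ({a, b} : Finset V).card = 2 := by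
    rw [Finset.card_insert_of_notMem (by simpa using hadj.ne), Finset.card_singleton]
  have hle1 : cv ≤ 1 := by
    have h2 := hx1.2 {a, b} ⟨a, Finset.mem_insert_self _ _⟩
    rw [hx1fun, rowSum_smul, rowSum_unit, if_pos hinU, hcard2] at h2
    norm_num at h2
    linarith
  have hge1 : ¬ cv < 1 := by
    intro hlt
    have heps' : eps < eps / cv := by
      rw [lt_div_iff₀ hcvpos]
      nlinarith
    refine hmax (eps / cv) heps' ?_
    rw [zero_add]
    have : (eps / cv) • g = unitVec G e1 := by
      funext e
      simp only [Pi.smul_apply, smul_eq_mul, unitVec]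
      by_cases he : e = e1
      · subst he
        rw [if_pos rfl]
        field_simp [hcv]
        exact hcv.symm
      · rw [hgsupp e he, if_neg he]; ring
    rw [this]
    exact unitVec_mem_MWF G e1
  have : cv = 1 := le_antisymm hle1 (not_lt.mp hge1)
  exact ⟨e1, by rw [hx1fun, this, one_smul]⟩


end Helpers

/-- For a graph on at least 4 vertices with a spanning forest `F` of at least 3 edges,
every circuit walk in the maximum weight forest polytope from the zero vector to the
characteristic vector of `F` has length at least 3; hence the circuit diameter is at
least 3. -/
theorem stmt18 {V : Type*} [Fintype V] [DecidableEq V] (G : SimpleGraph V)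
    [DecidableRel G.Adj] (hV : 4 ≤ Fintype.card V)
    (F : Finset G.edgeSet) (hF : 3 ≤ F.card)
    (hforest : (edgeSub G (↑F : Set G.edgeSet)).IsAcyclic)
    (hspan : ∀ u v : V, G.Reachable u v → (edgeSub G (↑F : Set G.edgeSet)).Reachable u v) :
    ∀ (k : ℕ) (x : Fin (k + 1) → G.edgeSet → ℝ),
      IsCircuitWalk G k x → x 0 = 0 → x (Fin.last k) = chiVec G F → 3 ≤ k := by
  have hNV : Nonempty V := Fintype.card_pos_iff.mp (by omega)
  intro k x hwalk h0 hlast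
  by_contra hk
  push_neg at hk
  interval_cases k
  · -- k = 0
    rw [show (Fin.last 0) = 0 from rfl, h0] at hlast
    obtain ⟨f, hf⟩ : F.Nonempty := Finset.card_pos.mp (by omega)
    have hval := congrFun hlast.symm f
    unfold chiVec at hval
    rw [if_pos hf] at hval
    norm_num at hval
  · -- k = 1
    have hstep := hwalk.2 0
    rw [show ((0 : Fin 1)).castSucc = (0 : Fin 2) from rfl,
        show ((0 : Fin 1)).succ = (Fin.last 1) from rfl, h0, hlast] at hstep
    obtain ⟨g, eps, hcirc, heps, heq, -⟩ := hstep
    rw [zero_add] at heq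
    obtain ⟨f, hfF, f', hf'F, hff'⟩ := Finset.one_lt_card.mp (by omega : 1 < F.card)
    have hgf' : g f' ≠ 0 := by
      intro h
      have hval := congrFun heq f'
      simp only [Pi.smul_apply, smul_eq_mul, h, mul_zero] at hval
      unfold chiVec at hval
      rw [if_pos hf'F] at hval
      norm_num at hval
    refine notCircuit_master G g f f' hff'.symm hgf' ?_ hcirc
    intro U hU
    have h1 : rowSum G (chiVec G F) U ≠ 0 := ne_of_gt (rowSum_chi_pos G F f hfF U hU)
    rw [heq, rowSum_smul] at h1
    exact fun h => h1 (by rw [h, mul_zero])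
  · -- k = 2
    have hstep0 := hwalk.2 0
    have hstep1 := hwalk.2 1
    rw [show ((0 : Fin 2)).castSucc = (0 : Fin 3) from rfl,
        show ((0 : Fin 2)).succ = (1 : Fin 3) from rfl, h0] at hstep0
    rw [show ((1 : Fin 2)).castSucc = (1 : Fin 3) from rfl,
        show ((1 : Fin 2)).succ = (Fin.last 2) from rfl, hlast] at hstep1
    obtain ⟨e1, hx1⟩ := step_from_zero G (x 1) hstep0 (hwalk.1 1)
    rw [hx1] at hstep1
    obtain ⟨g, eps, hcirc, heps, heq, -⟩ := hstep1
    have heqd : eps • g = chiVec G F - unitVec G e1 := by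
      rw [heq]; abel
    have hepsne : eps ≠ 0 := ne_of_gt heps
    by_cases he1F : e1 ∈ F
    · have hcard : 1 < (F.erase e1).card := by
        have := Finset.card_erase_of_mem he1F; omega
      obtain ⟨f, hf, f'', hf'', hff''⟩ := Finset.one_lt_card.mp hcard
      have hfF : f ∈ F := Finset.mem_of_mem_erase hf
      have hfe1 : f ≠ e1 := Finset.ne_of_mem_erase hf
      have hf''F : f'' ∈ F := Finset.mem_of_mem_erase hf''
      have hf''e1 : f'' ≠ e1 := Finset.ne_of_mem_erase hf''
      have hgf'' : g f'' ≠ 0 := by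
        intro h
        have hval := congrFun heqd f''
        simp only [Pi.smul_apply, Pi.sub_apply, smul_eq_mul, h, mul_zero] at hval
        unfold chiVec unitVec at hval
        rw [if_pos hf''F, if_neg hf''e1] at hval
        norm_num at hval
      refine notCircuit_master G g f f'' hff''.symm hgf'' ?_ hcirc
      intro U hU
      have hpos := rowSum_d_pos G F e1 f e1 hfF he1F (Ne.symm hfe1)
        (fun U _ he => he) U hU
      rw [← heqd, rowSum_smul] at hpos
      intro h
      rw [h, mul_zero] at hpos
      exact lt_irrefl 0 hpos
    · -- e1 ∉ F
      obtain ⟨⟨u, v⟩, hab⟩ := Quot.exists_rep (e1 : Sym2 V)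
      have hab' : (e1 : Sym2 V) = s(u, v) := hab.symm
      have hadj : G.Adj u v := by
        have h2 := e1.2
        rw [hab'] at h2
        exact G.mem_edgeSet.mp h2
      have hnadj : ¬ (edgeSub G (↑F : Set G.edgeSet)).Adj u v := by
        intro h
        obtain ⟨-, f2, hf2F, hf2⟩ := (edgeSub_adj G _ u v).mp h
        have : f2 = e1 := Subtype.ext (hf2.trans hab'.symm)
        exact he1F (Finset.mem_coe.mp (this ▸ hf2F))
      obtain ⟨b, c, huc, h1, h2⟩ := exists_two_edges hadj.ne hnadj (hspan u v hadj.reachable)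
      obtain ⟨hub, f0, hf0F, hf0⟩ := (edgeSub_adj G _ u b).mp h1
      obtain ⟨hbc, f, hfF, hf⟩ := (edgeSub_adj G _ b c).mp h2
      have hfF' : f ∈ F := Finset.mem_coe.mp hfF
      have hf0F' : f0 ∈ F := Finset.mem_coe.mp hf0F
      have hff0 : f0 ≠ f := by
        intro h
        rw [h, hf] at hf0
        rcases Sym2.eq_iff.mp hf0.symm with ⟨h1', h2'⟩ | ⟨h1', h2'⟩
        · exact hbc h2'
        · exact huc h1'
      have hfe1 : f ≠ e1 := fun h => he1F (h ▸ hfF')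
      have hge1 : g e1 ≠ 0 := by
        intro h
        have hval := congrFun heqd e1
        simp only [Pi.smul_apply, Pi.sub_apply, smul_eq_mul, h, mul_zero] at hval
        unfold chiVec unitVec at hval
        rw [if_neg he1F, if_pos rfl] at hval
        norm_num at hval
      refine notCircuit_master G g f e1 (Ne.symm hfe1) hge1 ?_ hcirc
      intro U hU
      have hincl : ∀ U : Finset V, (∀ w ∈ (f : Sym2 V), w ∈ U) →
          (∀ w ∈ (e1 : Sym2 V), w ∈ U) → ∀ w ∈ (f0 : Sym2 V), w ∈ U := by
        intro U hfU he1U w hw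
        rw [hf0, Sym2.mem_iff] at hw
        rcases hw with rfl | rfl
        · exact he1U w (by rw [hab']; simp)
        · exact hfU w (by rw [hf]; simp)
      have hpos := rowSum_d_pos G F e1 f f0 hfF' hf0F' hff0 hincl U hU
      rw [← heqd, rowSum_smul] at hpos
      intro h
      rw [h, mul_zero] at hpos
      exact lt_irrefl 0 hpos
end
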